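/- For L ≥ 5, the state φ = (|0…0⟩+|1…1⟩) + Σ_{l=2}^{L} (|1 0…0 1_l 0…0⟩ + |0 1…1 0_l 1…1⟩) ∈ (ℂ²)^⊗L has all L reduced one-qubit density matrices equal to (1/2)I (i.e., maximally mixed). -/

import Mathlib

open Matrix BigOperators

/-- The (unnormalized) reduced one-qubit density matrix of the `l`-th qubit of
`φ ∈ (ℂ²)^⊗L`: the partial trace of `|φ⟩⟨φ|` over all qubits except the `l`-th. -/
noncomputable def reducedDensity (L : ℕ) (φ : (Fin L → Fin 2) → ℂ) (l : Fin L) :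
    Matrix (Fin 2) (Fin 2) ℂ :=
  fun i j => ∑ s : Fin L → Fin 2,
    if s l = i then φ s * star (φ (Function.update s l j)) else 0

/-- Basis state with qubits `1` and `l` excited and all others in the ground state. -/
def uPat (L : ℕ) [NeZero L] (l : Fin L) : Fin L → Fin 2 :=
  fun m => if m = 0 ∨ m = l then 1 else 0

/-- The state `φ = (|0…0⟩+|1…1⟩) + Σ_{l=2}^{L} (|1 0…0 1_l 0…0⟩ + |0 1…1 0_l 1…1⟩)`. -/
noncomputable def stablePhi (L : ℕ) [NeZero L] : (Fin L → Fin 2) → ℂ :=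
  fun s => (if s = (fun _ => 0) then 1 else 0) + (if s = (fun _ => 1) then 1 else 0)
    + ∑ l ∈ Finset.univ.erase 0,
        ((if s = uPat L l then 1 else 0)
          + (if s = (fun m => 1 - uPat L l m) then 1 else 0))

section aux
variable (L : ℕ) [NeZero L]

/-- the basic patterns: `Avec 0 = |0…0⟩`, `Avec k = uPat k` for `k ≠ 0`. -/
def Avec (k : Fin L) : Fin L → Fin 2 :=
  if k = 0 then (fun _ => 0) else uPat L k

def vvec (p : Bool × Fin L) : Fin L → Fin 2 :=
  if p.1 then (fun m => 1 - Avec L p.2 m) else Avec L p.2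

variable {L}

lemma Avec_apply (k m : Fin L) :
    Avec L k m = if m = 0 then (if k = 0 then 0 else 1) else (if m = k then 1 else 0) := by
  unfold Avec uPat
  by_cases hk : k = 0 <;> by_cases hm : m = 0 <;> simp [hk, hm]

lemma fin2_sub_inj {a b : Fin 2} (h : 1 - a = 1 - b) : a = b := by revert a b; decide

lemma fin2_zero_ne_one' : (0 : Fin 2) ≠ 1 := by decide

/-- core combinatorial fact: two support vectors agreeing away from `l` are identical
(indices included), provided `5 ≤ L`. -/
lemma agree (hL : 5 ≤ L) (b b' : Bool) (k k' l : Fin L)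
    (h : ∀ m, m ≠ l → vvec L (b, k) m = vvec L (b', k') m) :
    (b, k) = ((b', k') : Bool × Fin L) := by
  have hcard : (({0, k, k', l} : Finset (Fin L))).card ≤ 4 := by
    apply le_trans (Finset.card_insert_le _ _)
    have h2 : (({k, k', l} : Finset (Fin L))).card ≤ 3 := by
      apply le_trans (Finset.card_insert_le _ _)
      have h3 : (({k', l} : Finset (Fin L))).card ≤ 2 := by
        apply le_trans (Finset.card_insert_le _ _); simp
      omega
    omega
  have hex : ∃ m : Fin L, m ∉ ({0, k, k', l} : Finset (Fin L)) := by
    by_contra hc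
    push_neg at hc
    have : (Finset.univ : Finset (Fin L)).card ≤ 4 := by
      refine le_trans (Finset.card_le_card ?_) hcard
      intro x _; exact hc x
    simp [Finset.card_fin] at this
    omega
  -- case split on booleans
  cases b <;> cases b' <;> simp only [vvec] at h
  · -- false false : A k vs A k'
    simp only [if_neg Bool.false_ne_true, Bool.false_eq_true, if_false] at h
    suffices hk : k = k' by rw [hk]
    by_contra hkk
    have hd : ∀ m, Avec L k m ≠ Avec L k' m → m = l := by
      intro m hne
      by_contra h'
      exact hne (h m h')
    by_cases hk0 : k = 0
    · have hk'0 : k' ≠ 0 := fun h => hkk (hk0.trans h.symm)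
      have e1 : (0 : Fin L) = l := hd 0 (by simp [Avec_apply, hk0, hk'0])
      have e2 : k' = l := hd k' (by simp [Avec_apply, hk0, hk'0])
      exact hk'0 (e2.trans e1.symm)
    · by_cases hk'0 : k' = 0
      · have e1 : (0 : Fin L) = l := hd 0 (by simp [Avec_apply, hk0, hk'0])
        have e2 : k = l := hd k (by simp [Avec_apply, hk0, hk'0])
        exact hk0 (e2.trans e1.symm)
      · have e1 : k = l := hd k (by simp [Avec_apply, hk0, hk'0, hkk])
        have e2 : k' = l := hd k' (by simp [Avec_apply, hk0, hk'0, Ne.symm hkk])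
        exact hkk (e1.trans e2.symm)
  · -- false true : A k vs complement of A k' : impossible
    exfalso
    obtain ⟨m, hm⟩ := hex
    simp only [Finset.mem_insert, Finset.mem_singleton, not_or] at hm
    obtain ⟨hm0, hmk, hmk', hml⟩ := hm
    have := h m hml
    simp [Avec_apply, hm0, hmk, hmk'] at this
  · -- true false
    exfalso
    obtain ⟨m, hm⟩ := hex
    simp only [Finset.mem_insert, Finset.mem_singleton, not_or] at hm
    obtain ⟨hm0, hmk, hmk', hml⟩ := hm
    have := h m hml
    simp [Avec_apply, hm0, hmk, hmk'] at this
  · -- true true : complements agree ⇒ A k = A k' off l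
    simp only [if_pos] at h
    have h' : ∀ m, m ≠ l → Avec L k m = Avec L k' m := fun m hm => fin2_sub_inj (h m hm)
    suffices hk : k = k' by rw [hk]
    by_contra hkk
    have hd : ∀ m, Avec L k m ≠ Avec L k' m → m = l := by
      intro m hne
      by_contra hx
      exact hne (h' m hx)
    by_cases hk0 : k = 0
    · have hk'0 : k' ≠ 0 := fun hh => hkk (hk0.trans hh.symm)
      have e1 : (0 : Fin L) = l := hd 0 (by simp [Avec_apply, hk0, hk'0])
      have e2 : k' = l := hd k' (by simp [Avec_apply, hk0, hk'0])
      exact hk'0 (e2.trans e1.symm)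
    · by_cases hk'0 : k' = 0
      · have e1 : (0 : Fin L) = l := hd 0 (by simp [Avec_apply, hk0, hk'0])
        have e2 : k = l := hd k (by simp [Avec_apply, hk0, hk'0])
        exact hk0 (e2.trans e1.symm)
      · have e1 : k = l := hd k (by simp [Avec_apply, hk0, hk'0, hkk])
        have e2 : k' = l := hd k' (by simp [Avec_apply, hk0, hk'0, Ne.symm hkk])
        exact hkk (e1.trans e2.symm)

end aux

section aux2
variable {L : ℕ} [NeZero L]

lemma vvec_inj (hL : 5 ≤ L) : Function.Injective (vvec L) := by
  rintro ⟨b, k⟩ ⟨b', k'⟩ h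
  exact agree hL b b' k k' 0 (fun m _ => congrFun h m)

lemma vvec_false_zero : vvec L (false, 0) = (fun _ => (0 : Fin 2)) := by
  funext m; simp [vvec, Avec]

lemma vvec_true_zero : vvec L (true, 0) = (fun _ => (1 : Fin 2)) := by
  funext m; simp [vvec, Avec]

lemma vvec_false_ne (k : Fin L) (hk : k ≠ 0) : vvec L (false, k) = uPat L k := by
  simp [vvec, Avec, hk]

lemma vvec_true_ne (k : Fin L) (hk : k ≠ 0) :
    vvec L (true, k) = (fun m => 1 - uPat L k m) := by
  simp [vvec, Avec, hk]

lemma phi_eq (s : Fin L → Fin 2) :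
    stablePhi L s = ∑ p : Bool × Fin L, (if s = vvec L p then (1 : ℂ) else 0) := by
  rw [Fintype.sum_prod_type, Fintype.sum_bool,
    ← Finset.add_sum_erase Finset.univ _ (Finset.mem_univ (0 : Fin L)),
    ← Finset.add_sum_erase Finset.univ _ (Finset.mem_univ (0 : Fin L)),
    vvec_true_zero, vvec_false_zero]
  have ht : (∑ k ∈ Finset.univ.erase (0:Fin L), (if s = vvec L (true, k) then (1:ℂ) else 0))
      = ∑ k ∈ Finset.univ.erase (0:Fin L),
          (if s = (fun m => 1 - uPat L k m) then (1:ℂ) else 0) :=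
    Finset.sum_congr rfl (fun k hk => by rw [vvec_true_ne k (Finset.ne_of_mem_erase hk)])
  have hf : (∑ k ∈ Finset.univ.erase (0:Fin L), (if s = vvec L (false, k) then (1:ℂ) else 0))
      = ∑ k ∈ Finset.univ.erase (0:Fin L), (if s = uPat L k then (1:ℂ) else 0) :=
    Finset.sum_congr rfl (fun k hk => by rw [vvec_false_ne k (Finset.ne_of_mem_erase hk)])
  rw [ht, hf, stablePhi, Finset.sum_add_distrib]
  ring

lemma phi_indicator (hL : 5 ≤ L) (s : Fin L → Fin 2) :
    stablePhi L s = if ∃ p, vvec L p = s then 1 else 0 := by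
  rw [phi_eq]
  by_cases h : ∃ p, vvec L p = s
  · obtain ⟨p, hp⟩ := h
    rw [if_pos ⟨p, hp⟩, Finset.sum_eq_single p]
    · rw [if_pos hp.symm]
    · intro q _ hq
      rw [if_neg]
      intro hs
      exact hq (vvec_inj hL (by rw [hs.symm, hp] : vvec L q = vvec L p))
    · simp
  · rw [if_neg h]
    apply Finset.sum_eq_zero
    intro q _
    rw [if_neg]
    intro hs
    exact h ⟨q, hs.symm⟩

lemma phi01 (hL : 5 ≤ L) (s : Fin L → Fin 2) :
    stablePhi L s = 0 ∨ stablePhi L s = 1 := by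
  rw [phi_indicator hL]
  by_cases h : ∃ p, vvec L p = s
  · right; rw [if_pos h]
  · left; rw [if_neg h]

lemma norm_sum (hL : 5 ≤ L) :
    ∑ s : Fin L → Fin 2, (‖stablePhi L s‖ : ℂ) ^ 2 = 2 * L := by
  have h1 : ∀ s : Fin L → Fin 2, (‖stablePhi L s‖ : ℂ) ^ 2 = stablePhi L s := by
    intro s
    rcases phi01 hL s with h | h <;> rw [h] <;> simp
  rw [Finset.sum_congr rfl (fun s _ => h1 s)]
  simp_rw [phi_eq]
  rw [Finset.sum_comm]
  have h2 : ∀ p : Bool × Fin L,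
      (∑ s : Fin L → Fin 2, if s = vvec L p then (1:ℂ) else 0) = 1 := by
    intro p; simp
  rw [Finset.sum_congr rfl (fun p _ => h2 p), Finset.sum_const, Finset.card_univ]
  simp [mul_comm]

lemma count_lemma (l : Fin L) (i : Fin 2) :
    ∑ p : Bool × Fin L, (if vvec L p l = i then (1:ℂ) else 0) = L := by
  rw [Fintype.sum_prod_type, Fintype.sum_bool, ← Finset.sum_add_distrib]
  have key : ∀ k : Fin L,
      ((if vvec L (true, k) l = i then (1:ℂ) else 0)
        + (if vvec L (false, k) l = i then (1:ℂ) else 0)) = 1 := by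
    intro k
    have hv : vvec L (true, k) l = 1 - vvec L (false, k) l := by simp [vvec]
    have f1 : ∀ a b : Fin 2, a ≠ b → 1 - a = b := by decide
    have f2 : ∀ a : Fin 2, 1 - a ≠ a := by decide
    by_cases h : vvec L (false, k) l = i
    · rw [if_pos h, hv, if_neg (fun hc => f2 _ (hc.trans h.symm))]
      norm_num
    · rw [if_neg h, hv, if_pos (f1 _ _ h)]
      norm_num
  rw [Finset.sum_congr rfl (fun k _ => key k), Finset.sum_const, Finset.card_univ]
  simp

lemma rd (hL : 5 ≤ L) (l : Fin L) :
    reducedDensity L (stablePhi L) l = (L : ℂ) • (1 : Matrix (Fin 2) (Fin 2) ℂ) := by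
  have hstar : ∀ t, star (stablePhi L t) = stablePhi L t := by
    intro t; rcases phi01 hL t with h | h <;> simp [h]
  ext i j
  rw [reducedDensity]
  simp_rw [hstar]
  by_cases hij : i = j
  · subst hij
    have step : ∀ s : Fin L → Fin 2,
        (if s l = i then stablePhi L s * stablePhi L (Function.update s l i) else 0)
        = ∑ p : Bool × Fin L, (if s = vvec L p ∧ vvec L p l = i then (1:ℂ) else 0) := by
      intro s
      by_cases hs : s l = i
      · rw [if_pos hs]
        have hupd : Function.update s l i = s := by
          rw [← hs]; exact Function.update_eq_self l s
        rw [hupd]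
        have hsq : stablePhi L s * stablePhi L s = stablePhi L s := by
          rcases phi01 hL s with h | h <;> rw [h] <;> ring
        rw [hsq, phi_eq]
        apply Finset.sum_congr rfl
        intro p _
        by_cases hsp : s = vvec L p
        · rw [if_pos hsp, if_pos ⟨hsp, by rw [← hsp]; exact hs⟩]
        · rw [if_neg hsp, if_neg (fun hc => hsp hc.1)]
      · rw [if_neg hs]
        symm
        apply Finset.sum_eq_zero
        intro p _
        rw [if_neg]
        rintro ⟨h1, h2⟩
        exact hs (by rw [h1]; exact h2)
    rw [Finset.sum_congr rfl (fun s _ => step s), Finset.sum_comm]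
    have inner : ∀ p : Bool × Fin L,
        (∑ s : Fin L → Fin 2, if s = vvec L p ∧ vvec L p l = i then (1:ℂ) else 0)
        = if vvec L p l = i then (1:ℂ) else 0 := by
      intro p
      by_cases hp : vvec L p l = i <;> simp [hp]
    rw [Finset.sum_congr rfl (fun p _ => inner p), count_lemma]
    simp [Matrix.one_apply]
  · have hz : ((L:ℂ) • (1 : Matrix (Fin 2) (Fin 2) ℂ)) i j = 0 := by
      simp [Matrix.one_apply_ne hij]
    rw [hz]
    apply Finset.sum_eq_zero
    intro s _
    by_cases hs : s l = i
    · rw [if_pos hs]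
      rcases phi01 hL s with h1 | h1
      · rw [h1, zero_mul]
      · rcases phi01 hL (Function.update s l j) with g1 | g1
        · rw [g1, mul_zero]
        · exfalso
          rw [phi_indicator hL] at h1 g1
          have hp : ∃ p, vvec L p = s := by
            by_contra hc
            rw [if_neg hc] at h1
            exact one_ne_zero h1.symm
          have hq : ∃ q, vvec L q = Function.update s l j := by
            by_contra hc
            rw [if_neg hc] at g1
            exact one_ne_zero g1.symm
          obtain ⟨⟨b, k⟩, hp⟩ := hp
          obtain ⟨⟨b', k'⟩, hq⟩ := hq
          have hagree : ∀ m, m ≠ l → vvec L (b, k) m = vvec L (b', k') m := by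
            intro m hm
            rw [hp, hq, Function.update_of_ne hm]
          have heq : ((b, k) : Bool × Fin L) = (b', k') := agree hL b b' k k' l hagree
          apply hij
          have : s l = Function.update s l j l := by
            conv_lhs => rw [← hp, heq, hq]
          rw [Function.update_self] at this
          rw [← hs, this]
    · rw [if_neg hs]

end aux2

/-- For `L ≥ 5` all `L` (normalized) reduced one-qubit density matrices of the state
`stablePhi L` are maximally mixed, i.e. equal to `(1/2)I`. -/
theorem stmt14 (L : ℕ) [NeZero L] (hL : 5 ≤ L) :
    ∀ l : Fin L,
      ((∑ s : Fin L → Fin 2, (‖stablePhi L s‖ : ℂ) ^ 2))⁻¹ •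
          reducedDensity L (stablePhi L) l
        = (1/2 : ℂ) • (1 : Matrix (Fin 2) (Fin 2) ℂ) := by
  intro l
  rw [norm_sum hL, rd hL l, smul_smul]
  congr 1
  have hL0 : (L : ℂ) ≠ 0 := Nat.cast_ne_zero.mpr (NeZero.ne L)
  field_simp
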